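/- Let $A$ be the Laplacian on $[n]$ with edge weights $a_{st} = f_{st} 1\{s \sim t\} + \varepsilon 1\{s \not\sim t\}$ for a partition $(V_1,\ldots,V_K)$ of $[n]$ with $|V_i| = n_i$ and $\varepsilon > 0$. Then $A + \varepsilon J$ is block-diagonal up to permutation with blocks $L_{V_i} + (n - n_i)\varepsilon I + \varepsilon J_{n_i}$, and $\det(A + \varepsilon J) = (n\varepsilon)^K \prod_{i=1}^K \prod_{j=2}^{n_i} (\lambda_{ij} + (n - n_i)\varepsilon)$, where $\lambda_{ij}$ is the $j$-th smallest eigenvalue of $L_{V_i}$. -/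

import Mathlib

open Matrix Finset

/-- The weighted-graph Laplacian on `Fin n` with edge weights `f`. -/
def lap {n : ℕ} (f : Fin n → Fin n → ℝ) : Matrix (Fin n) (Fin n) ℝ :=
  Matrix.of fun s t =>
    if s = t then ∑ u ∈ Finset.univ.erase s, f s u else -(f s t)

/-- The Laplacian of the induced weighted subgraph on a finset `S`. -/
def lapOn {n : ℕ} (f : Fin n → Fin n → ℝ) (S : Finset (Fin n)) :
    Matrix {x : Fin n // x ∈ S} {x : Fin n // x ∈ S} ℝ :=
  Matrix.of fun a b =>
    if (a : Fin n) = (b : Fin n) then ∑ u ∈ S.erase (a : Fin n), f a u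
    else -(f a b)

/-- The all-ones matrix. -/
def Jmat (ι : Type*) : Matrix ι ι ℝ := Matrix.of fun _ _ => 1

section helpers

open Polynomial

set_option maxRecDepth 8000

variable {ι : Type*} [Fintype ι] [DecidableEq ι]

lemma det_one_add_smul_Jmat (β : ℝ) :
    ((1 : Matrix ι ι ℝ) + β • Jmat ι).det = 1 + β * Fintype.card ι := by
  have h : β • Jmat ι = replicateCol Unit (fun _ => β) * replicateRow Unit (fun _ => (1:ℝ)) := by
    ext i j
    simp [Jmat, Matrix.mul_apply, Matrix.replicateCol, Matrix.replicateRow]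
  rw [h, det_one_add_replicateCol_mul_replicateRow]
  simp [dotProduct, mul_comm]

lemma det_smul_one_add_smul_Jmat {α : ℝ} (β : ℝ) (hα : α ≠ 0) :
    (α • (1 : Matrix ι ι ℝ) + β • Jmat ι).det
      = α ^ (Fintype.card ι) * (1 + (β / α) * Fintype.card ι) := by
  have h : α • (1 : Matrix ι ι ℝ) + β • Jmat ι
      = α • ((1 : Matrix ι ι ℝ) + (β / α) • Jmat ι) := by
    rw [smul_add, smul_smul]
    field_simp
  rw [h, det_smul, det_one_add_smul_Jmat]

omit [DecidableEq ι] in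
lemma Jmat_mul_Jmat : Jmat ι * Jmat ι = (Fintype.card ι : ℝ) • Jmat ι := by
  ext i j
  simp [Jmat, Matrix.mul_apply]

lemma charpoly_eval (L : Matrix ι ι ℝ) (x : ℝ) :
    L.charpoly.eval x = (x • (1 : Matrix ι ι ℝ) - L).det := by
  have h := (Polynomial.evalRingHom x).map_det (charmatrix L)
  rw [Matrix.charpoly]
  rw [show (Polynomial.evalRingHom x) (charmatrix L).det = (charmatrix L).det.eval x from rfl] at h
  rw [h]
  congr 1
  ext i j
  by_cases hij : i = j
  · subst hij; simp [charmatrix_apply_eq, Matrix.one_apply]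
  · simp [charmatrix_apply_ne _ _ _ hij, Matrix.one_apply_ne hij, hij]

lemma det_add_smul_one {m : ℕ} (hcard : Fintype.card ι = m) (L : Matrix ι ι ℝ)
    (lam : Fin m → ℝ)
    (hroots : L.charpoly.roots = Multiset.map lam Finset.univ.val) (x : ℝ) :
    (L + x • (1 : Matrix ι ι ℝ)).det = ∏ j, (x + lam j) := by
  have hm : Multiset.card L.charpoly.roots = L.charpoly.natDegree := by
    rw [hroots, Matrix.charpoly_natDegree_eq_dim, Multiset.card_map, hcard]
    simp
  have hsplit := prod_multiset_X_sub_C_of_monic_of_roots_card_eq (Matrix.charpoly_monic L) hm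
  have heval : L.charpoly.eval (-x) = (-1 : ℝ) ^ m * ∏ j, (x + lam j) := by
    rw [← hsplit, Polynomial.eval_multiset_prod, Multiset.map_map, hroots, Multiset.map_map]
    calc (Multiset.map ((eval (-x)) ∘ (fun a => X - C a) ∘ lam) Finset.univ.val).prod
        = (Multiset.map (fun j => -(x + lam j)) Finset.univ.val).prod := by
          congr 1; apply Multiset.map_congr rfl; intro j _; simp; ring
      _ = ∏ j, -(x + lam j) := rfl
      _ = (-1 : ℝ) ^ m * ∏ j, (x + lam j) := by
          rw [Finset.prod_congr rfl (fun j _ => by ring :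
            ∀ j ∈ univ, -(x + lam j) = (-1) * (x + lam j)),
            Finset.prod_mul_distrib, Finset.prod_const]
          simp
  have h2 : L.charpoly.eval (-x) = (-1 : ℝ) ^ m * (L + x • 1).det := by
    rw [charpoly_eval]
    have : (-x) • (1 : Matrix ι ι ℝ) - L = -(L + x • 1) := by
      module
    rw [this, Matrix.det_neg, hcard]
  have hne : ((-1 : ℝ) ^ m) ≠ 0 := pow_ne_zero _ (by norm_num)
  exact mul_left_cancel₀ hne (h2.symm.trans heval)

lemma det_block {m : ℕ} (hcard : Fintype.card ι = m) (L : Matrix ι ι ℝ)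
    (hLJ : L * Jmat ι = 0) {ε : ℝ}
    (lam : Fin m → ℝ)
    (hpos : 0 < m) (h0 : lam ⟨0, hpos⟩ = 0)
    (hdetL : ∀ x : ℝ, (L + x • (1 : Matrix ι ι ℝ)).det = ∏ j, (x + lam j)) (c : ℝ) :
    (L + c • (1 : Matrix ι ι ℝ) + ε • Jmat ι).det
      = (c + ε * m) * ∏ j ∈ Finset.univ.filter (fun j : Fin m => (j : ℕ) ≠ 0), (c + lam j) := by
  have hfilter : Finset.univ.filter (fun j : Fin m => (j : ℕ) ≠ 0)
      = Finset.univ.erase ⟨0, hpos⟩ := by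
    ext j; simp [Fin.ext_iff]
  have hprodsplit : ∀ x : ℝ, ∏ j, (x + lam j)
      = x * ∏ j ∈ Finset.univ.filter (fun j : Fin m => (j : ℕ) ≠ 0), (x + lam j) := by
    intro x
    rw [hfilter, ← Finset.mul_prod_erase Finset.univ _ (Finset.mem_univ ⟨0, hpos⟩), h0, add_zero]
  set P : ℝ[X] := ((L.map C) + (X : ℝ[X]) • 1 + (C ε) • ((Jmat ι).map C)).det with hP
  set Q : ℝ[X] := ((X : ℝ[X]) + C (ε * m)) *
      ∏ j ∈ Finset.univ.filter (fun j : Fin m => (j : ℕ) ≠ 0), ((X : ℝ[X]) + C (lam j)) with hQ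
  have hevalp : ∀ x : ℝ, P.eval x = (L + x • 1 + ε • Jmat ι).det := by
    intro x
    have h := (Polynomial.evalRingHom x).map_det
      ((L.map C) + (X : ℝ[X]) • 1 + (C ε) • ((Jmat ι).map C))
    rw [hP]
    rw [show (Polynomial.evalRingHom x) ((L.map C) + (X : ℝ[X]) • 1
        + (C ε) • ((Jmat ι).map C)).det
      = ((L.map C) + (X : ℝ[X]) • 1 + (C ε) • ((Jmat ι).map C)).det.eval x from rfl] at h
    rw [h]
    congr 1
    ext i j
    by_cases hij : i = j <;>
      simp [RingHom.mapMatrix_apply, Matrix.map_apply, Matrix.one_apply, Jmat, hij]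
  have hevalq : ∀ x : ℝ, Q.eval x = (x + ε * m) *
      ∏ j ∈ Finset.univ.filter (fun j : Fin m => (j : ℕ) ≠ 0), (x + lam j) := by
    intro x
    simp [hQ, Polynomial.eval_prod]
  have hcore : ∀ x : ℝ, x ≠ 0 → x + ε * m ≠ 0 →
      (L + x • 1 + ε • Jmat ι).det = (x + ε * m) *
        ∏ j ∈ Finset.univ.filter (fun j : Fin m => (j : ℕ) ≠ 0), (x + lam j) := by
    intro x hx hα
    have hid : (L + x • 1 + ε • Jmat ι) * ((x + ε * m) • (1 : Matrix ι ι ℝ) + (-ε) • Jmat ι)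
        = (x + ε * m) • (L + x • (1 : Matrix ι ι ℝ)) := by
      simp only [Matrix.add_mul, Matrix.mul_add, Matrix.smul_mul, Matrix.mul_smul,
        Matrix.mul_one, Matrix.one_mul, hLJ, Jmat_mul_Jmat, hcard, smul_smul, smul_zero,
        mul_zero, zero_mul]
      module
    have hdetmul : (L + x • 1 + ε • Jmat ι).det *
        ((x + ε * m) • (1 : Matrix ι ι ℝ) + (-ε) • Jmat ι).det
        = (x + ε * m) ^ m * (L + x • 1).det := by
      rw [← det_mul, hid, det_smul, hcard]
    have hdetB : ((x + ε * m) • (1 : Matrix ι ι ℝ) + (-ε) • Jmat ι).det * (x + ε * m)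
        = (x + ε * m) ^ m * x := by
      rw [det_smul_one_add_smul_Jmat _ hα, hcard]
      field_simp
      ring
    have hL := hdetL x
    rw [hprodsplit x] at hL
    have key : (L + x • 1 + ε • Jmat ι).det * ((x + ε * m) ^ m * x)
        = ((x + ε * m) * ∏ j ∈ Finset.univ.filter (fun j : Fin m => (j : ℕ) ≠ 0), (x + lam j))
          * ((x + ε * m) ^ m * x) := by
      calc (L + x • 1 + ε • Jmat ι).det * ((x + ε * m) ^ m * x)
          = (L + x • 1 + ε • Jmat ι).det *
            (((x + ε * m) • (1 : Matrix ι ι ℝ) + (-ε) • Jmat ι).det * (x + ε * m)) := by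
            rw [hdetB]
        _ = ((L + x • 1 + ε • Jmat ι).det *
            ((x + ε * m) • (1 : Matrix ι ι ℝ) + (-ε) • Jmat ι).det) * (x + ε * m) := by ring
        _ = ((x + ε * m) ^ m * (L + x • 1).det) * (x + ε * m) := by rw [hdetmul]
        _ = _ := by rw [hL]; ring
    exact mul_right_cancel₀ (mul_ne_zero (pow_ne_zero _ hα) hx) key
  have hPQ : P = Q := by
    apply Polynomial.eq_of_infinite_eval_eq
    have hsub : ({0, -(ε * (m:ℝ))} : Set ℝ)ᶜ ⊆ {x : ℝ | eval x P = eval x Q} := by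
      intro x hx
      simp only [Set.mem_compl_iff, Set.mem_insert_iff, Set.mem_singleton_iff, not_or] at hx
      have hα : x + ε * m ≠ 0 := by
        intro h; exact hx.2 (by linarith)
      simp only [Set.mem_setOf_eq]
      rw [hevalp, hevalq]
      exact hcore x hx.1 hα
    exact Set.Infinite.mono hsub ((Set.toFinite _).infinite_compl)
  have := hevalp c
  rw [hPQ, hevalq] at this
  rw [← this]

lemma det_blockDiagonal'' {κ : Type*} [Fintype κ] [DecidableEq κ] [LinearOrder κ]
    {m' : κ → Type*} [∀ k, Fintype (m' k)] [∀ k, DecidableEq (m' k)]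
    (d : ∀ k, Matrix (m' k) (m' k) ℝ) :
    (Matrix.blockDiagonal' d).det = ∏ k, (d k).det := by
  rw [(Matrix.blockTriangular_blockDiagonal' d).det_fintype]
  refine Finset.prod_congr rfl fun k _ => ?_
  let e : m' k ≃ {a : Σ j, m' j // a.fst = k} :=
    { toFun := fun x => ⟨⟨k, x⟩, rfl⟩
      invFun := fun a => cast (congrArg m' a.2) a.1.2
      left_inv := fun x => rfl
      right_inv := by rintro ⟨⟨j, x⟩, rfl⟩; rfl }
  rw [← Matrix.det_submatrix_equiv_self e (((Matrix.blockDiagonal' d).toSquareBlock Sigma.fst k))]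
  congr 1
  ext x y
  simp [Matrix.toSquareBlock, Matrix.toSquareBlockProp, Matrix.submatrix, e,
    Matrix.blockDiagonal'_apply_eq]

end helpers

lemma lapOn_mul_Jmat {n : ℕ} (f : Fin n → Fin n → ℝ) (S : Finset (Fin n)) :
    lapOn f S * Jmat {x : Fin n // x ∈ S} = 0 := by
  ext s t
  simp only [Matrix.mul_apply, Jmat, Matrix.of_apply, mul_one, Matrix.zero_apply]
  calc ∑ u : {x : Fin n // x ∈ S}, lapOn f S s u
      = ∑ u ∈ S, (if (s : Fin n) = u then ∑ w ∈ S.erase (s : Fin n), f s w else -(f s u)) :=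
        Finset.sum_coe_sort S
          (fun u => if (s : Fin n) = u then ∑ w ∈ S.erase (s : Fin n), f s w else -(f s u))
    _ = (∑ w ∈ S.erase (s : Fin n), f s w) + ∑ u ∈ S.erase (s : Fin n), -(f s u) := by
        rw [← Finset.add_sum_erase S
          (fun u => if (s : Fin n) = u then ∑ w ∈ S.erase (s : Fin n), f s w else -(f s u)) s.2]
        congr 1
        · exact if_pos rfl
        · exact Finset.sum_congr rfl
            (fun u hu => if_neg (Ne.symm (Finset.mem_erase.mp hu).1))
    _ = 0 := by
        rw [Finset.sum_neg_distrib]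
        ring

/-- let `A` be the Laplacian with edge weights
`a s t = f s t` if `s ∼ t` (same block of the partition `(V k)`) and `= ε` otherwise.
Then `A + ε J` is block diagonal up to a relabeling of the vertices, with blocks
`L_{V k} + (n - n_k) ε I + ε J_{n_k}`, and
`det (A + ε J) = (n ε)^K ∏ k ∏_{j ≥ 2} (lam k j + (n - n_k) ε)`,
where `lam k j` is the `j`-th smallest eigenvalue of `L_{V k}`. -/
theorem det_modified_laplacian_add_eps_allOnes {n K : ℕ} (hn : 0 < n) (hK : 0 < K)
    (ε : ℝ) (hε : 0 < ε) (f : Fin n → Fin n → ℝ)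
    (hsym : ∀ s t, f s t = f t s) (hnn : ∀ s t, 0 ≤ f s t)
    (V : Fin K → Finset (Fin n))
    (hdisj : ∀ k l, k ≠ l → Disjoint (V k) (V l))
    (hcover : ∀ i, ∃ k, i ∈ V k)
    (hne : ∀ k, (V k).Nonempty)
    (a : Fin n → Fin n → ℝ)
    (ha : ∀ s t : Fin n, s ≠ t →
      ((∃ k, s ∈ V k ∧ t ∈ V k) → a s t = f s t) ∧
        ((¬ ∃ k, s ∈ V k ∧ t ∈ V k) → a s t = ε))
    (lam : (k : Fin K) → Fin (V k).card → ℝ)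
    (hmono : ∀ k, Monotone (lam k))
    (hzero : ∀ (k : Fin K) (j : Fin (V k).card), (j : ℕ) = 0 → lam k j = 0)
    (hroots : ∀ k,
      ((lapOn f (V k)).charpoly).roots = Multiset.map (lam k) Finset.univ.val) :
    (∃ e : ((k : Fin K) × {x : Fin n // x ∈ V k}) ≃ Fin n,
        (lap a + ε • Jmat (Fin n)).submatrix e e =
          Matrix.blockDiagonal' (fun k =>
            lapOn f (V k) + (((n : ℝ) - ((V k).card : ℝ)) * ε) • (1 : Matrix _ _ ℝ)
              + ε • Jmat {x : Fin n // x ∈ V k})) ∧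
      (lap a + ε • Jmat (Fin n)).det =
        ((n : ℝ) * ε) ^ K *
          ∏ k, ∏ j ∈ Finset.univ.filter (fun j : Fin (V k).card => (j : ℕ) ≠ 0),
            (lam k j + ((n : ℝ) - ((V k).card : ℝ)) * ε) := by
  classical
  -- the assignment of blocks
  have hg : ∀ i : Fin n, (i ∈ V (hcover i).choose) := fun i => (hcover i).choose_spec
  have huniq : ∀ (i : Fin n) (k : Fin K), i ∈ V k → (hcover i).choose = k := by
    intro i k hik
    by_contra hne'
    exact (Finset.disjoint_left.mp (hdisj _ _ hne') (hg i)) hik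
  let e : ((k : Fin K) × {x : Fin n // x ∈ V k}) ≃ Fin n :=
    { toFun := fun p => p.2.1
      invFun := fun i => ⟨(hcover i).choose, ⟨i, hg i⟩⟩
      left_inv := by
        rintro ⟨k, x, hx⟩
        have h := huniq x k hx
        subst h
        rfl
      right_inv := fun i => rfl }
  -- diagonal entry computation
  have hdiag : ∀ (k : Fin K) (s : Fin n), s ∈ V k →
      ∑ u ∈ Finset.univ.erase s, a s u
        = (∑ u ∈ (V k).erase s, f s u) + ((n : ℝ) - ((V k).card : ℝ)) * ε := by
    intro k s hs
    have hsplit := Finset.sum_filter_add_sum_filter_not (Finset.univ.erase s)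
      (fun u => u ∈ V k) (a s)
    have h1 : (Finset.univ.erase s).filter (fun u => u ∈ V k) = (V k).erase s := by
      ext u
      simp only [Finset.mem_filter, Finset.mem_erase, Finset.mem_univ, true_and, and_true]
      try tauto
    have h2 : ∑ u ∈ (V k).erase s, a s u = ∑ u ∈ (V k).erase s, f s u := by
      refine Finset.sum_congr rfl fun u hu => ?_
      obtain ⟨hus, huk⟩ := Finset.mem_erase.mp hu
      exact (ha s u (Ne.symm hus)).1 ⟨k, hs, huk⟩
    have h3 : ∑ u ∈ (Finset.univ.erase s).filter (fun u => u ∉ V k), a s u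
        = ∑ u ∈ (Finset.univ.erase s).filter (fun u => u ∉ V k), ε := by
      refine Finset.sum_congr rfl fun u hu => ?_
      simp only [Finset.mem_filter, Finset.mem_erase, Finset.mem_univ, true_and] at hu
      refine (ha s u (Ne.symm hu.1.1)).2 ?_
      rintro ⟨l, hsl, hul⟩
      have hlk : l = k := by rw [← huniq s l hsl, huniq s k hs]
      exact hu.2 (hlk ▸ hul)
    have hcardle : (V k).card ≤ n := by
      have := Finset.card_le_univ (V k)
      simpa using this
    have hcardpos : 0 < (V k).card := Finset.card_pos.mpr (hne k)
    have hcards : ((Finset.univ.erase s).filter (fun u => u ∉ V k)).card = n - (V k).card := by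
      have hc := Finset.card_filter_add_card_filter_not
        (s := Finset.univ.erase s) (p := fun u => u ∈ V k)
      rw [h1] at hc
      have e1 : ((V k).erase s).card = (V k).card - 1 := Finset.card_erase_of_mem hs
      have e2 : (Finset.univ.erase s).card = n - 1 := by
        rw [Finset.card_erase_of_mem (Finset.mem_univ s)]
        simp
      omega
    rw [← hsplit, h1, h2, h3, Finset.sum_const, hcards, nsmul_eq_mul]
    try rw [Nat.cast_sub hcardle]
    try ring
  -- the key entrywise identity
  have hblock : (lap a + ε • Jmat (Fin n)).submatrix e e =
      Matrix.blockDiagonal' (fun k =>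
        lapOn f (V k) + (((n : ℝ) - ((V k).card : ℝ)) * ε) • (1 : Matrix _ _ ℝ)
          + ε • Jmat {x : Fin n // x ∈ V k}) := by
    ext ⟨k, s⟩ ⟨l, t⟩
    show (lap a + ε • Jmat (Fin n)) (s : Fin n) (t : Fin n) = _
    by_cases hkl : k = l
    · subst hkl
      rw [Matrix.blockDiagonal'_apply_eq]
      by_cases hst : s = t
      · subst hst
        have hd := hdiag k s s.2
        simp only [Matrix.add_apply, Matrix.smul_apply, Matrix.one_apply_eq, lap, lapOn, Jmat,
          Matrix.of_apply, smul_eq_mul, mul_one, if_true, eq_self_iff_true, ite_true]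
        rw [hd]
        try ring
      · have hst' : (s : Fin n) ≠ (t : Fin n) := fun h => hst (Subtype.ext h)
        have hfa : a s t = f s t := (ha s t hst').1 ⟨k, s.2, t.2⟩
        simp only [Matrix.add_apply, Matrix.smul_apply, lap, lapOn, Jmat,
          Matrix.of_apply, if_neg hst', Matrix.one_apply_ne hst, smul_eq_mul, mul_one,
          smul_zero, mul_zero]
        rw [hfa]
        ring
    · rw [Matrix.blockDiagonal'_apply_ne _ _ _ hkl]
      have hst' : (s : Fin n) ≠ (t : Fin n) := by
        intro h
        apply hkl
        have hk := huniq (s : Fin n) k s.2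
        have hl := huniq (s : Fin n) l (h ▸ t.2)
        rw [← hk, hl]
      have hfa : a s t = ε := by
        refine (ha s t hst').2 ?_
        rintro ⟨mblk, hsm, htm⟩
        apply hkl
        have hk := huniq (s : Fin n) k s.2
        have hm := huniq (s : Fin n) mblk hsm
        have hl := huniq (t : Fin n) l t.2
        have hm' := huniq (t : Fin n) mblk htm
        rw [← hk, hm, ← hm', hl]
      simp only [Matrix.add_apply, Matrix.smul_apply, lap, Jmat, Matrix.of_apply,
        if_neg hst', smul_eq_mul, mul_one]
      rw [hfa]
      ring
  refine ⟨⟨e, hblock⟩, ?_⟩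
  -- determinant computation
  have hdet1 : (lap a + ε • Jmat (Fin n)).det =
      (Matrix.blockDiagonal' (fun k =>
        lapOn f (V k) + (((n : ℝ) - ((V k).card : ℝ)) * ε) • (1 : Matrix _ _ ℝ)
          + ε • Jmat {x : Fin n // x ∈ V k})).det := by
    rw [← hblock, Matrix.det_submatrix_equiv_self]
  rw [hdet1, det_blockDiagonal'']
  have hblockdet : ∀ k : Fin K,
      (lapOn f (V k) + (((n : ℝ) - ((V k).card : ℝ)) * ε) • (1 : Matrix _ _ ℝ)
        + ε • Jmat {x : Fin n // x ∈ V k}).det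
      = ((n : ℝ) * ε) *
        ∏ j ∈ Finset.univ.filter (fun j : Fin (V k).card => (j : ℕ) ≠ 0),
          (lam k j + ((n : ℝ) - ((V k).card : ℝ)) * ε) := by
    intro k
    have hcard : Fintype.card {x : Fin n // x ∈ V k} = (V k).card := Fintype.card_coe _
    have hcardpos : 0 < (V k).card := Finset.card_pos.mpr (hne k)
    have h0 : lam k ⟨0, hcardpos⟩ = 0 := hzero k ⟨0, hcardpos⟩ rfl
    have hdetL := det_add_smul_one hcard (lapOn f (V k)) (lam k) (hroots k)
    have := det_block hcard (lapOn f (V k)) (lapOn_mul_Jmat f (V k)) (ε := ε) (lam k)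
      hcardpos h0 hdetL (((n : ℝ) - ((V k).card : ℝ)) * ε)
    rw [this]
    have hc : ((n : ℝ) - ((V k).card : ℝ)) * ε + ε * ((V k).card : ℝ) = (n : ℝ) * ε := by ring
    rw [hc]
    congr 1
    exact Finset.prod_congr rfl fun j _ => by ring
  rw [Finset.prod_congr rfl fun k _ => hblockdet k, Finset.prod_mul_distrib,
    Finset.prod_const, Finset.card_univ, Fintype.card_fin]
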